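/- arXiv:2510.20773 — 2 statements merged into one kernel-verified Lean document; each statement's English description precedes it below -/
import Mathlib

section
/- Let α ∈ (0,1), s > t ≥ 0, and suppose f ∈ H^s(ℝ^d) satisfies 0 < |f|_{H^t} ≤ a and ‖f‖_{H^s} ≤ b. Then |f|_{H^{t,α}} ≤ C a (log(b/a + 1))^α, with C depending only on α and s − t. -/
open MeasureTheory FourierTransform

section LogSobolevAux

lemma my_rpow_add_le {a b p : ℝ} (ha : 0 ≤ a) (hb : 0 ≤ b) (hp : 0 ≤ p) (hp1 : p ≤ 1) :
    (a + b) ^ p ≤ a ^ p + b ^ p := by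
  have h := NNReal.rpow_add_le_add_rpow a.toNNReal b.toNNReal hp hp1
  rw [← Real.toNNReal_add ha hb] at h
  have h2 := NNReal.coe_le_coe.2 h
  simpa [NNReal.coe_rpow, Real.coe_toNNReal _ ha, Real.coe_toNNReal _ hb,
    Real.coe_toNNReal _ (add_nonneg ha hb)] using h2

lemma my_add_rpow_le {a b p : ℝ} (ha : 0 ≤ a) (hb : 0 ≤ b) (hp1 : 1 ≤ p) :
    a ^ p + b ^ p ≤ (a + b) ^ p := by
  have h := NNReal.add_rpow_le_rpow_add a.toNNReal b.toNNReal hp1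
  rw [← Real.toNNReal_add ha hb] at h
  have h2 := NNReal.coe_le_coe.2 h
  simpa [NNReal.coe_rpow, Real.coe_toNNReal _ ha, Real.coe_toNNReal _ hb,
    Real.coe_toNNReal _ (add_nonneg ha hb)] using h2

lemma my_log_le {y p : ℝ} (hy : 0 ≤ y) (hp : 0 < p) (hp1 : p ≤ 1) :
    Real.log (1 + y) ≤ y ^ p / p := by
  have h1y : (0:ℝ) < 1 + y := by linarith
  have h1 : (1 + y) ^ p ≤ 1 + y ^ p := by
    simpa using my_rpow_add_le (zero_le_one) hy hp.le hp1
  have h2 : p * Real.log (1 + y) = Real.log ((1 + y) ^ p) := (Real.log_rpow h1y p).symm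
  have h3 : Real.log ((1 + y) ^ p) ≤ Real.log (1 + y ^ p) :=
    Real.log_le_log (Real.rpow_pos_of_pos h1y p) h1
  have h4 : Real.log (1 + y ^ p) ≤ y ^ p := by
    have := Real.log_le_sub_one_of_pos (x := 1 + y ^ p) (by positivity)
    linarith
  rw [le_div_iff₀ hp]
  nlinarith [h2, h3, h4]

lemma my_log_rpow_le {x q : ℝ} (hx : 0 ≤ x) (hq : 1 ≤ q) :
    Real.log (x ^ q + 1) ≤ q * Real.log (x + 1) := by
  have h1 : x ^ q + 1 ≤ (x + 1) ^ q := by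
    simpa using my_add_rpow_le hx zero_le_one hq
  calc Real.log (x ^ q + 1) ≤ Real.log ((x + 1) ^ q) :=
        Real.log_le_log (by positivity) h1
    _ = q * Real.log (x + 1) := Real.log_rpow (by linarith) q

lemma my_log_lb {x : ℝ} (h0 : 0 ≤ x) (h1 : x ≤ 1) : x * Real.log 2 ≤ Real.log (1 + x) := by
  have key : Real.exp (x * Real.log 2) ≤ 1 + x := by
    have hc := convexOn_exp.2 (Set.mem_univ (0:ℝ)) (Set.mem_univ (Real.log 2))
      (by linarith : (0:ℝ) ≤ 1 - x) h0 (by ring)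
    simp only [smul_eq_mul, mul_zero, zero_add, Real.exp_zero, mul_one,
      Real.exp_log two_pos] at hc
    calc Real.exp (x * Real.log 2) ≤ (1 - x) * 1 + x * 2 := by simpa [mul_comm] using hc
      _ = 1 + x := by ring
  exact (Real.le_log_iff_exp_le (by linarith : (0:ℝ) < 1 + x)).2 key

lemma my_sqrt_add {x y : ℝ} (hx : 0 ≤ x) (hy : 0 ≤ y) :
    Real.sqrt (x + y) ≤ Real.sqrt x + Real.sqrt y := by
  rw [show Real.sqrt x + Real.sqrt y = Real.sqrt ((Real.sqrt x + Real.sqrt y)^2) from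
    (Real.sqrt_sq (by positivity)).symm]
  apply Real.sqrt_le_sqrt
  have hxx := Real.sq_sqrt hx
  have hyy := Real.sq_sqrt hy
  nlinarith [Real.sqrt_nonneg x, Real.sqrt_nonneg y]

lemma my_logpow {α σ x : ℝ} (hα0 : 0 < α) (hσ0 : 0 < σ) (hσα : σ ≤ α) (hx : 0 ≤ x) :
    Real.log (x + 1) ^ (2*α) ≤ (α/σ) ^ (2*α) * x ^ (2*σ) := by
  have hp0 : 0 < σ / α := div_pos hσ0 hα0
  have hp1 : σ / α ≤ 1 := (div_le_one hα0).2 hσα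
  have hL : Real.log (x + 1) ≤ (α/σ) * x ^ (σ/α) := by
    have := my_log_le hx hp0 hp1
    rw [add_comm]
    calc Real.log (1 + x) ≤ x ^ (σ/α) / (σ/α) := this
      _ = (α/σ) * x ^ (σ/α) := by rw [div_div_eq_mul_div, div_mul_eq_mul_div, mul_comm]
  have hLnn : 0 ≤ Real.log (x + 1) := Real.log_nonneg (by linarith)
  calc Real.log (x + 1) ^ (2*α) ≤ ((α/σ) * x ^ (σ/α)) ^ (2*α) :=
        Real.rpow_le_rpow hLnn hL (by positivity)
    _ = (α/σ) ^ (2*α) * (x ^ (σ/α)) ^ (2*α) :=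
        Real.mul_rpow (by positivity) (Real.rpow_nonneg hx _)
    _ = (α/σ) ^ (2*α) * x ^ (2*σ) := by
        rw [← Real.rpow_mul hx]
        have he : σ/α*(2*α) = 2*σ := by field_simp
        rw [he]

lemma my_xbound {t δ σ x : ℝ} (ht : 0 ≤ t) (hσ0 : 0 < σ) (hσδ : σ ≤ δ) (hx : 0 ≤ x) :
    x ^ (2*t) * x ^ (2*σ) ≤ (1 + x^2) ^ (t + δ) := by
  have h1 : x ^ (2*t) * x ^ (2*σ) = x ^ (2*(t+σ)) := by
    rw [← Real.rpow_add' hx (by positivity)]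
    ring_nf
  have h2 : x ^ (2*(t+σ)) = (x^2) ^ (t+σ) := by
    rw [Real.rpow_mul hx, Real.rpow_two]
  have h3 : (x^2) ^ (t+σ) ≤ (1 + x^2) ^ (t+σ) :=
    Real.rpow_le_rpow (sq_nonneg x) (by nlinarith) (by positivity)
  have h4 : (1 + x^2) ^ (t+σ) ≤ (1 + x^2) ^ (t+δ) :=
    Real.rpow_le_rpow_of_exponent_le (by nlinarith) (by linarith)
  rw [h1, h2]; linarith

lemma my_xbound' {t δ x : ℝ} (ht : 0 ≤ t) (hδ : 0 < δ) (hx : 0 ≤ x) :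
    x ^ (2*t) ≤ (1 + x^2) ^ (t + δ) := by
  have h2 : x ^ (2*t) = (x^2) ^ t := by rw [Real.rpow_mul hx, Real.rpow_two]
  have h3 : (x^2) ^ t ≤ (1 + x^2) ^ t :=
    Real.rpow_le_rpow (sq_nonneg x) (by nlinarith) ht
  have h4 : (1 + x^2) ^ t ≤ (1 + x^2) ^ (t+δ) :=
    Real.rpow_le_rpow_of_exponent_le (by nlinarith) (by linarith)
  rw [h2]; linarith

lemma my_two_rpow {u v q : ℝ} (hu : 0 ≤ u) (hv : 0 ≤ v) (hq : 0 ≤ q) :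
    (u + v) ^ q ≤ 2 ^ q * (u ^ q + v ^ q) := by
  rcases le_total u v with h | h
  · calc (u + v) ^ q ≤ (2 * v) ^ q := by
          apply Real.rpow_le_rpow (by linarith) (by linarith) hq
      _ = 2 ^ q * v ^ q := Real.mul_rpow (by norm_num) hv
      _ ≤ 2 ^ q * (u ^ q + v ^ q) := by
          have := Real.rpow_nonneg hu q
          have h2 : (0:ℝ) ≤ 2 ^ q := Real.rpow_nonneg (by norm_num) q
          nlinarith
  · calc (u + v) ^ q ≤ (2 * u) ^ q := by
          apply Real.rpow_le_rpow (by linarith) (by linarith) hq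
      _ = 2 ^ q * u ^ q := Real.mul_rpow (by norm_num) hu
      _ ≤ 2 ^ q * (u ^ q + v ^ q) := by
          have := Real.rpow_nonneg hv q
          have h2 : (0:ℝ) ≤ 2 ^ q := Real.rpow_nonneg (by norm_num) q
          nlinarith

lemma my_key {α σ x lam : ℝ} (hα0 : 0 < α) (hα1 : α < 1) (hσ0 : 0 < σ) (hσα : σ ≤ α)
    (hx : 0 ≤ x) (hlam : 1 ≤ lam) :
    Real.log (x + 1) ^ (2*α) ≤
      4 * Real.log (lam + 1) ^ (2*α) + 4 * ((α/σ) ^ (2*α) * (x/lam) ^ (2*σ)) := by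
  have hlam0 : 0 < lam := by linarith
  have hdiv : 0 ≤ x / lam := div_nonneg hx hlam0.le
  have hu : 0 ≤ Real.log (lam + 1) := Real.log_nonneg (by linarith)
  have hw : 0 ≤ Real.log (x/lam + 1) := Real.log_nonneg (by linarith)
  have hsplit : Real.log (x + 1) ≤ Real.log (lam + 1) + Real.log (x/lam + 1) := by
    rw [← Real.log_mul (by linarith : (0:ℝ) < lam + 1).ne' (by linarith : (0:ℝ) < x/lam + 1).ne']
    apply Real.log_le_log (by linarith)
    have : lam * (x/lam) = x := by field_simp
    nlinarith [div_nonneg hx hlam0.le]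
  have hLnn : 0 ≤ Real.log (x + 1) := Real.log_nonneg (by linarith)
  have hstep : Real.log (x + 1) ^ (2*α) ≤
      2 ^ (2*α) * (Real.log (lam + 1) ^ (2*α) + Real.log (x/lam + 1) ^ (2*α)) := by
    calc Real.log (x + 1) ^ (2*α)
        ≤ (Real.log (lam + 1) + Real.log (x/lam + 1)) ^ (2*α) :=
          Real.rpow_le_rpow hLnn hsplit (by positivity)
      _ ≤ 2 ^ (2*α) * (Real.log (lam + 1) ^ (2*α) + Real.log (x/lam + 1) ^ (2*α)) :=
          my_two_rpow hu hw (by positivity)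
  have h4 : (2:ℝ) ^ (2*α) ≤ 4 := by
    calc (2:ℝ) ^ (2*α) ≤ (2:ℝ) ^ (2:ℝ) :=
          Real.rpow_le_rpow_of_exponent_le (by norm_num) (by linarith)
      _ = 4 := by rw [Real.rpow_two]; norm_num
  have hw2 : Real.log (x/lam + 1) ^ (2*α) ≤ (α/σ) ^ (2*α) * (x/lam) ^ (2*σ) :=
    my_logpow hα0 hσ0 hσα hdiv
  have hsum : 0 ≤ Real.log (lam + 1) ^ (2*α) + Real.log (x/lam + 1) ^ (2*α) := by positivity
  nlinarith [Real.rpow_nonneg (show (0:ℝ) ≤ 2 by norm_num) (2*α),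
    Real.rpow_nonneg hu (2*α)]

end LogSobolevAux

/-- If `0 < |f|_{H^t} ≤ a` and `‖f‖_{H^s} ≤ b` with `s = t + δ`, then
`|f|_{H^{t,α}} ≤ C a (log(b/a + 1))^α`, with `C` depending only on `α` and `δ = s - t`. -/
theorem log_sobolev_interpolation_bound (α δ : ℝ) (hα : α ∈ Set.Ioo (0:ℝ) 1) (hδ : 0 < δ) :
    ∃ C > 0, ∀ (d : ℕ) (t : ℝ), 0 ≤ t →
      ∀ (f : EuclideanSpace ℝ (Fin d) → ℂ) (a b : ℝ),
        Integrable (fun ξ => ‖ξ‖ ^ (2*t) * ‖𝓕 f ξ‖ ^ 2) →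
        Integrable (fun ξ => ‖ξ‖ ^ (2*t) * (Real.log (‖ξ‖ + 1)) ^ (2*α) * ‖𝓕 f ξ‖ ^ 2) →
        Integrable (fun ξ => (1 + ‖ξ‖ ^ 2) ^ (t + δ) * ‖𝓕 f ξ‖ ^ 2) →
        0 < Real.sqrt (∫ ξ, ‖ξ‖ ^ (2*t) * ‖𝓕 f ξ‖ ^ 2) →
        Real.sqrt (∫ ξ, ‖ξ‖ ^ (2*t) * ‖𝓕 f ξ‖ ^ 2) ≤ a →
        Real.sqrt (∫ ξ, (1 + ‖ξ‖ ^ 2) ^ (t + δ) * ‖𝓕 f ξ‖ ^ 2) ≤ b →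
        Real.sqrt (∫ ξ, ‖ξ‖ ^ (2*t) * (Real.log (‖ξ‖ + 1)) ^ (2*α) * ‖𝓕 f ξ‖ ^ 2)
          ≤ C * a * (Real.log (b / a + 1)) ^ α := by
  obtain ⟨hα0, hα1⟩ := hα
  set σ : ℝ := min α δ with hσdef
  have hσ0 : 0 < σ := lt_min hα0 hδ
  have hσα : σ ≤ α := min_le_left _ _
  have hσδ : σ ≤ δ := min_le_right _ _
  have hσ1 : σ < 1 := lt_of_le_of_lt hσα hα1
  have hlog2 : 0 < Real.log 2 := Real.log_pos (by norm_num)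
  have hl2α : 0 < (Real.log 2) ^ α := Real.rpow_pos_of_pos hlog2 α
  set K : ℝ := (α/σ) ^ (2*α) with hKdef
  have hK : 0 < K := Real.rpow_pos_of_pos (by positivity) _
  have hsK : 0 ≤ Real.sqrt K := Real.sqrt_nonneg K
  have hinvσ : 0 < (1/σ : ℝ) ^ α := Real.rpow_pos_of_pos (by positivity) α
  have hCpos : 0 < 2*(1/σ)^α + 3*Real.sqrt K / (Real.log 2)^α := by
    have h3 : 0 ≤ 3*Real.sqrt K / (Real.log 2)^α := div_nonneg (by positivity) hl2α.le
    nlinarith [hinvσ]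
  refine ⟨2*(1/σ)^α + 3*Real.sqrt K / (Real.log 2)^α, hCpos, ?_⟩
  set C : ℝ := 2*(1/σ)^α + 3*Real.sqrt K / (Real.log 2)^α with hCdef
  intro d t ht f a b h₁ h₂ h₃ hpos hA hB
  set A2 : ℝ := ∫ ξ, ‖ξ‖ ^ (2*t) * ‖𝓕 f ξ‖ ^ 2 with hA2def
  set B2 : ℝ := ∫ ξ, (1 + ‖ξ‖ ^ 2) ^ (t + δ) * ‖𝓕 f ξ‖ ^ 2 with hB2def
  set X2 : ℝ := ∫ ξ, ‖ξ‖ ^ (2*t) * (Real.log (‖ξ‖ + 1)) ^ (2*α) * ‖𝓕 f ξ‖ ^ 2 with hX2def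
  have hA2nn : 0 ≤ A2 := integral_nonneg (fun ξ => by positivity)
  have hB2nn : 0 ≤ B2 := integral_nonneg (fun ξ => by positivity)
  have hX2nn : 0 ≤ X2 := integral_nonneg (fun ξ => by
    have hl : 0 ≤ Real.log (‖ξ‖ + 1) := Real.log_nonneg (by linarith [norm_nonneg ξ])
    exact mul_nonneg (mul_nonneg (Real.rpow_nonneg (norm_nonneg _) _)
      (Real.rpow_nonneg hl _)) (sq_nonneg _))
  have ha : 0 < a := lt_of_lt_of_le hpos hA
  have hA2a : A2 ≤ a^2 := by nlinarith [Real.sq_sqrt hA2nn, Real.sqrt_nonneg A2]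
  have hB2b : B2 ≤ b^2 := by nlinarith [Real.sq_sqrt hB2nn, Real.sqrt_nonneg B2]
  have hAB : A2 ≤ B2 := by
    apply integral_mono h₁ h₃
    intro ξ
    have := my_xbound' ht hδ (norm_nonneg ξ)
    have hn : (0:ℝ) ≤ ‖𝓕 f ξ‖ ^ 2 := sq_nonneg _
    exact mul_le_mul_of_nonneg_right this hn
  have hb : 0 < b := lt_of_lt_of_le (lt_of_lt_of_le hpos (Real.sqrt_le_sqrt hAB)) hB
  have hba0 : 0 ≤ b/a := (div_pos hb ha).le
  have hLgoal : 0 ≤ Real.log (b/a + 1) := Real.log_nonneg (by linarith)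
  have hLgα : 0 ≤ (Real.log (b/a + 1)) ^ α := Real.rpow_nonneg hLgoal α
  rcases le_total b a with hba | hab
  · -- case b ≤ a
    have hX2K : X2 ≤ K * b^2 := by
      have step : X2 ≤ ∫ ξ, K * ((1 + ‖ξ‖ ^ 2) ^ (t + δ) * ‖𝓕 f ξ‖ ^ 2) := by
        apply integral_mono h₂ (h₃.const_mul K)
        intro ξ
        have hx := norm_nonneg ξ
        have hn : (0:ℝ) ≤ ‖𝓕 f ξ‖ ^ 2 := sq_nonneg _
        have hlp := my_logpow hα0 hσ0 hσα hx
        have hxb := my_xbound ht hσ0 hσδ hx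
        have hcore : ‖ξ‖ ^ (2*t) * (Real.log (‖ξ‖ + 1)) ^ (2*α)
            ≤ K * (1 + ‖ξ‖ ^ 2) ^ (t + δ) := by
          have h1 : ‖ξ‖ ^ (2*t) * (Real.log (‖ξ‖ + 1)) ^ (2*α)
              ≤ ‖ξ‖ ^ (2*t) * (K * ‖ξ‖ ^ (2*σ)) :=
            mul_le_mul_of_nonneg_left hlp (Real.rpow_nonneg hx _)
          calc ‖ξ‖ ^ (2*t) * (Real.log (‖ξ‖ + 1)) ^ (2*α)
              ≤ ‖ξ‖ ^ (2*t) * (K * ‖ξ‖ ^ (2*σ)) := h1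
            _ = K * (‖ξ‖ ^ (2*t) * ‖ξ‖ ^ (2*σ)) := by ring
            _ ≤ K * (1 + ‖ξ‖ ^ 2) ^ (t + δ) := mul_le_mul_of_nonneg_left hxb hK.le
        simpa [mul_assoc] using mul_le_mul_of_nonneg_right hcore hn
      rw [integral_const_mul] at step
      calc X2 ≤ K * B2 := step
        _ ≤ K * b^2 := mul_le_mul_of_nonneg_left hB2b hK.le
    have hsX : Real.sqrt X2 ≤ Real.sqrt K * b := by
      calc Real.sqrt X2 ≤ Real.sqrt (K * b^2) := Real.sqrt_le_sqrt hX2K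
        _ = Real.sqrt K * b := by rw [Real.sqrt_mul hK.le, Real.sqrt_sq hb.le]
    -- now show sqrt K * b ≤ C * a * (log (b/a+1))^α
    have hr0 : 0 < b/a := div_pos hb ha
    have hr1 : b/a ≤ 1 := (div_le_one ha).2 hba
    have hlb : (b/a) * Real.log 2 ≤ Real.log (b/a + 1) := by
      have := my_log_lb hr0.le hr1
      rwa [add_comm] at this
    have hstep1 : b * (Real.log 2)^α ≤ a * (Real.log (b/a + 1))^α := by
      have h1 : ((b/a) * Real.log 2) ^ α ≤ (Real.log (b/a + 1)) ^ α :=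
        Real.rpow_le_rpow (mul_nonneg hr0.le hlog2.le) hlb hα0.le
      have h2 : ((b/a) * Real.log 2) ^ α = (b/a)^α * (Real.log 2)^α :=
        Real.mul_rpow hr0.le hlog2.le
      have h3 : b/a ≤ (b/a)^α := by
        have := Real.rpow_le_rpow_of_exponent_ge hr0 hr1 hα1.le
        rwa [Real.rpow_one] at this
      have h4 : b/a * (Real.log 2)^α ≤ (Real.log (b/a + 1))^α := by
        calc b/a * (Real.log 2)^α ≤ (b/a)^α * (Real.log 2)^α :=
              mul_le_mul_of_nonneg_right h3 hl2α.le
          _ = ((b/a) * Real.log 2) ^ α := h2.symm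
          _ ≤ (Real.log (b/a + 1)) ^ α := h1
      have h5 := mul_le_mul_of_nonneg_left h4 ha.le
      calc b * (Real.log 2)^α = a * (b/a * (Real.log 2)^α) := by field_simp
        _ ≤ a * (Real.log (b/a + 1))^α := h5
    have hCge : Real.sqrt K / (Real.log 2)^α ≤ C := by
      rw [hCdef]
      have : Real.sqrt K / (Real.log 2)^α ≤ 3 * Real.sqrt K / (Real.log 2)^α :=
        (div_le_div_iff_of_pos_right hl2α).2 (by linarith)
      linarith [mul_pos two_pos hinvσ]
    calc Real.sqrt X2 ≤ Real.sqrt K * b := hsX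
      _ = (Real.sqrt K / (Real.log 2)^α) * (b * (Real.log 2)^α) := by field_simp
      _ ≤ (Real.sqrt K / (Real.log 2)^α) * (a * (Real.log (b/a + 1))^α) := by
          exact mul_le_mul_of_nonneg_left hstep1 (div_nonneg hsK hl2α.le)
      _ ≤ C * (a * (Real.log (b/a + 1))^α) := by
          exact mul_le_mul_of_nonneg_right hCge (mul_nonneg ha.le hLgα)
      _ = C * a * (Real.log (b/a + 1))^α := by ring
  · -- case a ≤ b
    have hr1 : 1 ≤ b/a := (one_le_div ha).2 hab
    have hr0 : 0 < b/a := div_pos hb ha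
    set r : ℝ := b/a with hrdef
    set lam : ℝ := r ^ (1/σ : ℝ) with hlamdef
    have hlam1 : 1 ≤ lam := Real.one_le_rpow hr1 (one_div_pos.2 hσ0).le
    have hlam0 : 0 < lam := by linarith
    set u : ℝ := Real.log (lam + 1) with hudef
    have hu0 : 0 ≤ u := Real.log_nonneg (by linarith)
    set L : ℝ := Real.log (r + 1) with hLdef
    have hL2 : Real.log 2 ≤ L := Real.log_le_log two_pos (by linarith)
    have hL0 : 0 ≤ L := le_trans hlog2.le hL2
    have hlamneg : lam ^ (-(2*σ)) = r ^ (-(2:ℝ)) := by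
      rw [hlamdef, ← Real.rpow_mul hr0.le]
      congr 1
      field_simp
    have hrm2 : r ^ (-(2:ℝ)) = a^2 / b^2 := by
      rw [Real.rpow_neg hr0.le, Real.rpow_two]
      rw [hrdef, div_pow, inv_div]
    have hc2nn : 0 ≤ 4 * K * lam ^ (-(2*σ)) := mul_nonneg (mul_nonneg (by norm_num) hK.le) (Real.rpow_nonneg hlam0.le _)
    have hc1nn : 0 ≤ 4 * u ^ (2*α) := mul_nonneg (by norm_num) (Real.rpow_nonneg hu0 _)
    have hX2bd : X2 ≤ (4 * u ^ (2*α)) * A2 + (4 * K * lam ^ (-(2*σ))) * B2 := by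
      have step : X2 ≤ ∫ ξ, ((4 * u ^ (2*α)) * (‖ξ‖ ^ (2*t) * ‖𝓕 f ξ‖ ^ 2)
          + (4 * K * lam ^ (-(2*σ))) * ((1 + ‖ξ‖ ^ 2) ^ (t + δ) * ‖𝓕 f ξ‖ ^ 2)) := by
        apply integral_mono h₂ ((h₁.const_mul _).add (h₃.const_mul _))
        intro ξ
        have hx := norm_nonneg ξ
        have hn : (0:ℝ) ≤ ‖𝓕 f ξ‖ ^ 2 := sq_nonneg _
        have hkey := my_key hα0 hα1 hσ0 hσα hx hlam1
        have hdr : (‖ξ‖/lam) ^ (2*σ) = ‖ξ‖ ^ (2*σ) * lam ^ (-(2*σ)) := by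
          rw [Real.div_rpow hx hlam0.le, Real.rpow_neg hlam0.le, div_eq_mul_inv]
        have hxb := my_xbound ht hσ0 hσδ hx
        have hcore : ‖ξ‖ ^ (2*t) * (Real.log (‖ξ‖ + 1)) ^ (2*α)
            ≤ (4 * u ^ (2*α)) * ‖ξ‖ ^ (2*t)
              + (4 * K * lam ^ (-(2*σ))) * (1 + ‖ξ‖ ^ 2) ^ (t + δ) := by
          have h1 : ‖ξ‖ ^ (2*t) * (Real.log (‖ξ‖ + 1)) ^ (2*α)
              ≤ ‖ξ‖ ^ (2*t) * (4 * u ^ (2*α) + 4 * (K * ((‖ξ‖/lam) ^ (2*σ)))) :=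
            mul_le_mul_of_nonneg_left hkey (Real.rpow_nonneg hx _)
          have h2 : ‖ξ‖ ^ (2*t) * (4 * u ^ (2*α) + 4 * (K * ((‖ξ‖/lam) ^ (2*σ))))
              = (4 * u ^ (2*α)) * ‖ξ‖ ^ (2*t)
                + (4 * K * lam ^ (-(2*σ))) * (‖ξ‖ ^ (2*t) * ‖ξ‖ ^ (2*σ)) := by
            rw [hdr]; ring
          have h3 : (4 * K * lam ^ (-(2*σ))) * (‖ξ‖ ^ (2*t) * ‖ξ‖ ^ (2*σ))
              ≤ (4 * K * lam ^ (-(2*σ))) * (1 + ‖ξ‖ ^ 2) ^ (t + δ) :=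
            mul_le_mul_of_nonneg_left hxb hc2nn
          linarith [h1, h2 ▸ h1]
        have := mul_le_mul_of_nonneg_right hcore hn
        calc ‖ξ‖ ^ (2*t) * (Real.log (‖ξ‖ + 1)) ^ (2*α) * ‖𝓕 f ξ‖ ^ 2
            ≤ ((4 * u ^ (2*α)) * ‖ξ‖ ^ (2*t)
              + (4 * K * lam ^ (-(2*σ))) * (1 + ‖ξ‖ ^ 2) ^ (t + δ)) * ‖𝓕 f ξ‖ ^ 2 := this
          _ = (4 * u ^ (2*α)) * (‖ξ‖ ^ (2*t) * ‖𝓕 f ξ‖ ^ 2)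
              + (4 * K * lam ^ (-(2*σ))) * ((1 + ‖ξ‖ ^ 2) ^ (t + δ) * ‖𝓕 f ξ‖ ^ 2) := by
            ring
      rwa [integral_add (h₁.const_mul _) (h₃.const_mul _),
        integral_const_mul, integral_const_mul] at step
    have hX2final : X2 ≤ 4 * u ^ (2*α) * a^2 + 4 * K * a^2 := by
      have e1 : (4 * u ^ (2*α)) * A2 ≤ (4 * u ^ (2*α)) * a^2 :=
        mul_le_mul_of_nonneg_left hA2a hc1nn
      have e2 : (4 * K * lam ^ (-(2*σ))) * B2 ≤ (4 * K * lam ^ (-(2*σ))) * b^2 :=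
        mul_le_mul_of_nonneg_left hB2b hc2nn
      have e3 : (4 * K * lam ^ (-(2*σ))) * b^2 = 4 * K * a^2 := by
        rw [hlamneg, hrm2]
        field_simp
      linarith
    have hsplit2 : Real.sqrt X2 ≤ 2 * u^α * a + 2 * Real.sqrt K * a := by
      have huα : 0 ≤ u ^ α := Real.rpow_nonneg hu0 α
      have hq1 : 4 * u ^ (2*α) * a^2 = (2 * u^α * a)^2 := by
        have : u ^ (2*α) = (u^α)^2 := by
          rw [← Real.rpow_natCast (u^α) 2, ← Real.rpow_mul hu0]
          norm_num [mul_comm]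
        rw [this]; ring
      have hq2 : 4 * K * a^2 = (2 * Real.sqrt K * a)^2 := by
        calc 4 * K * a^2 = 4 * (Real.sqrt K ^ 2) * a^2 := by rw [Real.sq_sqrt hK.le]
          _ = (2 * Real.sqrt K * a)^2 := by ring
      calc Real.sqrt X2 ≤ Real.sqrt (4 * u ^ (2*α) * a^2 + 4 * K * a^2) :=
            Real.sqrt_le_sqrt hX2final
        _ ≤ Real.sqrt (4 * u ^ (2*α) * a^2) + Real.sqrt (4 * K * a^2) :=
            my_sqrt_add (mul_nonneg hc1nn (sq_nonneg a))
              (mul_nonneg (mul_nonneg (by norm_num) hK.le) (sq_nonneg a))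
        _ = 2 * u^α * a + 2 * Real.sqrt K * a := by
            rw [hq1, hq2, Real.sqrt_sq (mul_nonneg (mul_nonneg (by norm_num) huα) ha.le),
              Real.sqrt_sq (mul_nonneg (mul_nonneg (by norm_num) hsK) ha.le)]
    have huL : u ≤ (1/σ) * L := by
      rw [hudef, hlamdef, hLdef]
      exact my_log_rpow_le hr0.le (one_le_one_div hσ0 hσ1.le)
    have huαL : u^α ≤ (1/σ)^α * L^α := by
      calc u^α ≤ ((1/σ) * L)^α := Real.rpow_le_rpow hu0 huL hα0.le
        _ = (1/σ)^α * L^α := Real.mul_rpow (one_div_pos.2 hσ0).le hL0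
    have hKterm : 2 * Real.sqrt K * a ≤ (2 * Real.sqrt K / (Real.log 2)^α) * a * L^α := by
      have h1 : (Real.log 2)^α ≤ L^α := Real.rpow_le_rpow hlog2.le hL2 hα0.le
      calc 2 * Real.sqrt K * a = (2 * Real.sqrt K / (Real.log 2)^α) * a * (Real.log 2)^α := by
            field_simp
        _ ≤ (2 * Real.sqrt K / (Real.log 2)^α) * a * L^α := by
            exact mul_le_mul_of_nonneg_left h1
              (mul_nonneg (div_nonneg (by positivity) hl2α.le) ha.le)
    have hfin : 2 * u^α * a + 2 * Real.sqrt K * a ≤ C * a * L^α := by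
      have h1 : 2 * u^α * a ≤ 2 * (1/σ)^α * a * L^α := by
        calc 2 * u^α * a = (2*a) * (u^α) := by ring
          _ ≤ (2*a) * ((1/σ)^α * L^α) := mul_le_mul_of_nonneg_left huαL (by linarith)
          _ = 2 * (1/σ)^α * a * L^α := by ring
      have h2 : 2 * (1/σ)^α * a * L^α + (2 * Real.sqrt K / (Real.log 2)^α) * a * L^α
          ≤ C * a * L^α := by
        have hC' : 2 * (1/σ)^α + 2 * Real.sqrt K / (Real.log 2)^α ≤ C := by
          rw [hCdef]
          have : 2 * Real.sqrt K / (Real.log 2)^α ≤ 3 * Real.sqrt K / (Real.log 2)^α :=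
            (div_le_div_iff_of_pos_right hl2α).2 (by linarith)
          linarith
        have haL : 0 ≤ a * L^α := mul_nonneg ha.le (Real.rpow_nonneg hL0 α)
        calc 2 * (1/σ)^α * a * L^α + (2 * Real.sqrt K / (Real.log 2)^α) * a * L^α
            = (2 * (1/σ)^α + 2 * Real.sqrt K / (Real.log 2)^α) * (a * L^α) := by ring
          _ ≤ C * (a * L^α) := mul_le_mul_of_nonneg_right hC' haL
          _ = C * a * L^α := by ring
      calc 2 * u^α * a + 2 * Real.sqrt K * a
          ≤ 2 * (1/σ)^α * a * L^α + (2 * Real.sqrt K / (Real.log 2)^α) * a * L^α :=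
            add_le_add h1 hKterm
        _ ≤ C * a * L^α := h2
    linarith [hsplit2, hfin]
end

section
/- Let I > 0, and let g : [0,T] → [1,∞) be continuous with g(t)⁴ ≥ exp(4I ∫₀ᵗ g(s)^{−4} ds) for all t. Then ∫₀ᵗ g(s)^{−4} ds ≤ log(1 + 4I t)/(4I), and consequently max_{0≤s≤t} g(s)⁴ ≥ 4I t / (4 log(1 + 4I t)) · c for an absolute constant c > 0 (precisely: max_{0≤s≤t} g(s)⁴ ≥ I t / log(1 + 4It) up to absolute constants). -/
open intervalIntegral

/-- Core integral inequality for the large Lagrangian deformation lower bound. -/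
theorem lagrangian_deformation_lower_bound (I T : ℝ) (hI : 0 < I) (hT : 0 ≤ T)
    (g : ℝ → ℝ) (hgc : ContinuousOn g (Set.Icc 0 T))
    (hg1 : ∀ s ∈ Set.Icc (0:ℝ) T, 1 ≤ g s)
    (hgrow : ∀ t ∈ Set.Icc (0:ℝ) T,
      Real.exp (4 * I * ∫ s in (0:ℝ)..t, ((g s) ^ 4)⁻¹) ≤ (g t) ^ 4) :
    ∀ t ∈ Set.Icc (0:ℝ) T,
      (∫ s in (0:ℝ)..t, ((g s) ^ 4)⁻¹) ≤ Real.log (1 + 4 * I * t) / (4 * I) ∧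
      (0 < t → ∃ s ∈ Set.Icc (0:ℝ) t,
        I * t / Real.log (1 + 4 * I * t) ≤ (g s) ^ 4) := by
  set f : ℝ → ℝ := fun s => ((g s) ^ 4)⁻¹ with hf
  set F : ℝ → ℝ := fun x => ∫ s in (0:ℝ)..x, f s with hF
  have hgpos : ∀ s ∈ Set.Icc (0:ℝ) T, 0 < (g s) ^ 4 := fun s hs =>
    pow_pos (lt_of_lt_of_le one_pos (hg1 s hs)) 4
  have hfc : ContinuousOn f (Set.Icc 0 T) :=
    (hgc.pow 4).inv₀ (fun s hs => ne_of_gt (hgpos s hs))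
  have hsub : ∀ x ∈ Set.Icc (0:ℝ) T, Set.uIcc (0:ℝ) x ⊆ Set.Icc 0 T := by
    intro x hx
    rw [Set.uIcc_of_le hx.1]
    exact Set.Icc_subset_Icc le_rfl hx.2
  have hint : ∀ x ∈ Set.Icc (0:ℝ) T, IntervalIntegrable f MeasureTheory.volume 0 x :=
    fun x hx => (hfc.mono (hsub x hx)).intervalIntegrable
  have hFc : ContinuousOn F (Set.Icc 0 T) := by
    have := intervalIntegral.continuousOn_primitive_interval'
      (hint T ⟨hT, le_rfl⟩) Set.left_mem_uIcc
    rwa [Set.uIcc_of_le hT] at this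
  have hFd : ∀ x ∈ Set.Ioo (0:ℝ) T, HasDerivAt F (f x) x := by
    intro x hx
    have hmem : Set.Icc (0:ℝ) T ∈ nhds x := Icc_mem_nhds hx.1 hx.2
    have hcx : ContinuousAt f x := hfc.continuousAt hmem
    exact intervalIntegral.integral_hasDerivAt_right
      (hint x ⟨hx.1.le, hx.2.le⟩)
      (ContinuousOn.stronglyMeasurableAtFilter isOpen_Ioo
        (hfc.mono Set.Ioo_subset_Icc_self) x hx) hcx
  set h : ℝ → ℝ := fun x => Real.exp (4 * I * F x) - 4 * I * x with hh
  have hhc : ContinuousOn h (Set.Icc 0 T) :=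
    (Real.continuous_exp.comp_continuousOn (continuousOn_const.mul hFc)).sub
      ((continuous_const.mul continuous_id).continuousOn)
  have hhd : ∀ x ∈ Set.Ioo (0:ℝ) T,
      HasDerivAt h (Real.exp (4 * I * F x) * (4 * I * f x) - 4 * I) x := by
    intro x hx
    have h1 := (((hFd x hx).const_mul (4 * I)).exp)
    have h2 : HasDerivAt (fun y : ℝ => 4 * I * y) (4 * I) x := by
      simpa using (hasDerivAt_id x).const_mul (4 * I)
    exact h1.sub h2
  have hanti : AntitoneOn h (Set.Icc 0 T) := by
    apply antitoneOn_of_deriv_nonpos (convex_Icc 0 T) hhc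
    · intro x hx
      rw [interior_Icc] at hx
      exact ((hhd x hx).differentiableAt).differentiableWithinAt
    · intro x hx
      rw [interior_Icc] at hx
      rw [(hhd x hx).deriv]
      have hxT : x ∈ Set.Icc (0:ℝ) T := ⟨hx.1.le, hx.2.le⟩
      have hb : Real.exp (4 * I * F x) * f x ≤ 1 := by
        rw [hf]
        rw [mul_inv_le_iff₀ (hgpos x hxT)]
        simpa using hgrow x hxT
      nlinarith [Real.exp_pos (4 * I * F x), hgpos x hxT, hI]
  have key : ∀ t ∈ Set.Icc (0:ℝ) T, Real.exp (4 * I * F t) ≤ 1 + 4 * I * t := by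
    intro t ht
    have := hanti (Set.left_mem_Icc.mpr hT) ht ht.1
    have hF0 : F 0 = 0 := by simp [hF]
    simp only [hh, hF0, mul_zero, Real.exp_zero] at this
    linarith
  intro t ht
  have hpos : (0:ℝ) < 1 + 4 * I * t := by nlinarith [ht.1, hI]
  have part1 : F t ≤ Real.log (1 + 4 * I * t) / (4 * I) := by
    have : 4 * I * F t ≤ Real.log (1 + 4 * I * t) :=
      (Real.le_log_iff_exp_le hpos).mpr (key t ht)
    rw [le_div_iff₀ (by positivity)]
    linarith
  refine ⟨part1, ?_⟩
  intro ht0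
  have hsub' : Set.Icc (0:ℝ) t ⊆ Set.Icc 0 T := Set.Icc_subset_Icc le_rfl ht.2
  obtain ⟨s, hs, hmax⟩ := isCompact_Icc.exists_isMaxOn (Set.nonempty_Icc.mpr ht0.le)
    (hgc.mono hsub')
  refine ⟨s, hs, ?_⟩
  have hM : 0 < (g s) ^ 4 := hgpos s (hsub' hs)
  have hlow : t * ((g s) ^ 4)⁻¹ ≤ F t := by
    have hmono : ∀ u ∈ Set.Icc (0:ℝ) t, ((g s) ^ 4)⁻¹ ≤ f u := by
      intro u hu
      have hgu : g u ≤ g s := hmax hu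
      have : (g u) ^ 4 ≤ (g s) ^ 4 :=
        pow_le_pow_left₀ (le_trans zero_le_one (hg1 u (hsub' hu))) hgu 4
      exact inv_anti₀ (hgpos u (hsub' hu)) this
    have := intervalIntegral.integral_mono_on ht0.le
      (_root_.intervalIntegrable_const (c := ((g s) ^ 4)⁻¹)) (hint t ht) hmono
    simpa [hF] using this
  have hL : 0 < Real.log (1 + 4 * I * t) := by
    apply Real.log_pos
    nlinarith
  rw [div_le_iff₀ hL]
  have h2 : t * ((g s) ^ 4)⁻¹ ≤ Real.log (1 + 4 * I * t) / (4 * I) :=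
    le_trans hlow part1
  have h3 : 4 * I * t ≤ (g s) ^ 4 * Real.log (1 + 4 * I * t) := by
    have h4 : t ≤ Real.log (1 + 4 * I * t) / (4 * I) * (g s) ^ 4 :=
      (mul_inv_le_iff₀ hM).mp h2
    have h5 : 4 * I * (Real.log (1 + 4 * I * t) / (4 * I) * (g s) ^ 4)
        = (g s) ^ 4 * Real.log (1 + 4 * I * t) := by
      field_simp
    nlinarith [mul_le_mul_of_nonneg_left h4 (by linarith : (0:ℝ) ≤ 4 * I)]
  nlinarith [hM, hL, hI, ht0, h3]
end
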